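/- For any integer n ≥ 3, the Mycielskian of the complete graph K_n satisfies gp(μ(K_n)) = n + 1, and moreover V ∪ {u*} is the unique gp-set of μ(K_n), where V is the original vertex set of K_n and u* is the root. -/

import Mathlib

open SimpleGraph

variable {V : Type*}

/-- The Mycielskian of a graph `G`: vertices are `some (Sum.inl v)` (original vertices),
`some (Sum.inr v)` (twin vertices), and `none` (the root `u*`). -/
def Mycielskian (G : SimpleGraph V) : SimpleGraph (Option (V ⊕ V)) :=
  SimpleGraph.fromRel (fun x y =>
    (∃ u v, G.Adj u v ∧ x = some (Sum.inl u) ∧ y = some (Sum.inl v)) ∨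
    (∃ u v, G.Adj u v ∧ x = some (Sum.inl u) ∧ y = some (Sum.inr v)) ∨
    (∃ u, x = some (Sum.inr u) ∧ y = none))

/-- `S` is a general position set: no shortest path between two vertices of `S`
contains a third element of `S`. -/
def IsGPSet (G : SimpleGraph V) (S : Set V) : Prop :=
  ∀ u ∈ S, ∀ v ∈ S, ∀ p : G.Walk u v, p.length = G.dist u v →
    ∀ w ∈ S, w ∈ p.support → w = u ∨ w = v

/-- The general position number of `G`: the maximum cardinality of a general position set. -/
noncomputable def gpNumber (G : SimpleGraph V) [Fintype V] : ℕ :=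
  sSup {k | ∃ S : Set V, IsGPSet G S ∧ S.ncard = k}

/-- A gp-set: a general position set of maximum cardinality. -/
def IsGpSet (G : SimpleGraph V) [Fintype V] (S : Set V) : Prop :=
  IsGPSet G S ∧ S.ncard = gpNumber G

namespace MycAux

variable {n : ℕ}

lemma adj_ll {u v : Fin n} :
    (Mycielskian (⊤ : SimpleGraph (Fin n))).Adj (some (.inl u)) (some (.inl v)) ↔ u ≠ v := by
  simp [Mycielskian, fromRel_adj]; tauto

lemma adj_lr {u v : Fin n} :
    (Mycielskian (⊤ : SimpleGraph (Fin n))).Adj (some (.inl u)) (some (.inr v)) ↔ u ≠ v := by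
  simp [Mycielskian, fromRel_adj]

lemma adj_rn {u : Fin n} :
    (Mycielskian (⊤ : SimpleGraph (Fin n))).Adj (some (.inr u)) none := by
  simp [Mycielskian, fromRel_adj]

lemma not_adj_rr {u v : Fin n} :
    ¬ (Mycielskian (⊤ : SimpleGraph (Fin n))).Adj (some (.inr u)) (some (.inr v)) := by
  simp [Mycielskian, fromRel_adj]

lemma not_adj_ln {u : Fin n} :
    ¬ (Mycielskian (⊤ : SimpleGraph (Fin n))).Adj (some (.inl u)) none := by
  simp [Mycielskian, fromRel_adj]

lemma adj_none {x : Option (Fin n ⊕ Fin n)} 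
    (h : (Mycielskian (⊤ : SimpleGraph (Fin n))).Adj none x) : ∃ u, x = some (.inr u) := by
  match x with
  | none => exact absurd h ((Mycielskian _).loopless.irrefl _)
  | some (Sum.inl u) => exact absurd h.symm not_adj_ln
  | some (Sum.inr u) => exact ⟨u, rfl⟩

/-- The exclusion lemma: if `x, y, z ∈ S` with `x-z-y` a path and `x,y` nonadjacent,
then `S` is not a general position set. -/
lemma gp_excl {S : Set (Option (Fin n ⊕ Fin n))}
    (hS : IsGPSet (Mycielskian (⊤ : SimpleGraph (Fin n))) S)
    {x y z : Option (Fin n ⊕ Fin n)} (hx : x ∈ S) (hy : y ∈ S) (hz : z ∈ S)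
    (hxz : (Mycielskian (⊤ : SimpleGraph (Fin n))).Adj x z)
    (hzy : (Mycielskian (⊤ : SimpleGraph (Fin n))).Adj z y)
    (hxy : ¬ (Mycielskian (⊤ : SimpleGraph (Fin n))).Adj x y) (hne : x ≠ y) : False := by
  set G := Mycielskian (⊤ : SimpleGraph (Fin n))
  have hd2 : G.dist x y ≤ 2 := by
    simpa using SimpleGraph.dist_le (Walk.cons hxz (Walk.cons hzy Walk.nil))
  have hd0 : G.dist x y ≠ 0 := by
    intro h
    rcases SimpleGraph.dist_eq_zero_iff_eq_or_not_reachable.mp h with h' | h'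
    · exact hne h'
    · exact h' ⟨Walk.cons hxz (Walk.cons hzy Walk.nil)⟩
  have hd1 : G.dist x y ≠ 1 := fun h => hxy (SimpleGraph.dist_eq_one_iff_adj.mp h)
  have hd : G.dist x y = 2 := by omega
  have := hS x hx y hy (Walk.cons hxz (Walk.cons hzy Walk.nil))
    (by simp [hd]) z hz (by simp)
  rcases this with h | h
  · exact hxz.ne h.symm
  · exact hzy.ne h

lemma T_gp (hn : 3 ≤ n) :
    IsGPSet (Mycielskian (⊤ : SimpleGraph (Fin n)))
      (insert none {x | ∃ v : Fin n, x = some (Sum.inl v)}) := by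
  have hex : ∀ a : Fin n, ∃ b : Fin n, b ≠ a := by
    obtain ⟨m, rfl⟩ : ∃ m, n = m + 3 := ⟨n - 3, by omega⟩
    exact fun a => exists_ne a
  intro u hu v hv p hp w hw hwsup
  simp only [Set.mem_insert_iff, Set.mem_setOf_eq] at hu hv hw
  rcases hu with rfl | ⟨a, rfl⟩
  · rcases hv with rfl | ⟨b, rfl⟩
    · -- none to none
      rw [SimpleGraph.dist_self] at hp
      cases p with
      | nil => simpa using hwsup
      | cons h q => simp at hp
    · -- none to inl b
      obtain ⟨c, hc⟩ := hex b
      have hl : p.length ≤ 2 := by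
        rw [hp]
        simpa using SimpleGraph.dist_le
          (Walk.cons adj_rn.symm (Walk.cons (adj_lr.mpr hc.symm).symm Walk.nil))
      cases p with
      | cons h q =>
        cases q with
        | nil => exact absurd h.symm not_adj_ln
        | cons h' q' =>
          cases q' with
          | nil =>
            simp only [Walk.support_cons, Walk.support_nil, List.mem_cons,
              List.not_mem_nil, or_false] at hwsup
            rcases hwsup with rfl | rfl | rfl
            · exact Or.inl rfl
            · obtain ⟨d, rfl⟩ := adj_none h
              rcases hw with h'' | ⟨e, h''⟩ <;> simp at h''
            · exact Or.inr rfl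
          | cons h'' q'' => simp at hl
  · rcases hv with rfl | ⟨b, rfl⟩
    · -- inl a to none
      obtain ⟨c, hc⟩ := hex a
      have hl : p.length ≤ 2 := by
        rw [hp]
        simpa using SimpleGraph.dist_le
          (Walk.cons (adj_lr.mpr hc.symm) (Walk.cons adj_rn Walk.nil))
      cases p with
      | cons h q =>
        cases q with
        | nil => exact absurd h not_adj_ln
        | cons h' q' =>
          cases q' with
          | nil =>
            simp only [Walk.support_cons, Walk.support_nil, List.mem_cons,
              List.not_mem_nil, or_false] at hwsup
            rcases hwsup with rfl | rfl | rfl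
            · exact Or.inl rfl
            · obtain ⟨d, rfl⟩ := adj_none h'.symm
              rcases hw with h'' | ⟨e, h''⟩ <;> simp at h''
            · exact Or.inr rfl
          | cons h'' q'' => simp at hl
    · -- inl a to inl b
      by_cases hab : a = b
      · subst hab
        rw [SimpleGraph.dist_self] at hp
        cases p with
        | nil => simpa using hwsup
        | cons h q => simp at hp
      · have hl : p.length ≤ 1 := by
          rw [hp]
          simpa using SimpleGraph.dist_le (Walk.cons (adj_ll.mpr hab) Walk.nil)
        cases p with
        | nil => exact absurd rfl hab
        | cons h q =>
          cases q with
          | nil =>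
            simp only [Walk.support_cons, Walk.support_nil, List.mem_cons,
              List.not_mem_nil, or_false] at hwsup
            tauto
          | cons h' q' => simp at hl

lemma T_ncard :
    (insert none {x | ∃ v : Fin n, x = some (Sum.inl v)}
      : Set (Option (Fin n ⊕ Fin n))).ncard = n + 1 := by
  have h1 : {x : Option (Fin n ⊕ Fin n) | ∃ v : Fin n, x = some (Sum.inl v)}
      = (fun v : Fin n => (some (Sum.inl v) : Option (Fin n ⊕ Fin n))) '' Set.univ := by
    ext x; simp [eq_comm]
  have hinj : Function.Injective
      (fun v : Fin n => (some (Sum.inl v) : Option (Fin n ⊕ Fin n))) := by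
    intro a b h; simpa using h
  rw [Set.ncard_insert_of_notMem (by simp), h1, Set.ncard_image_of_injective _ hinj,
    Set.ncard_univ, Nat.card_eq_fintype_card, Fintype.card_fin]

lemma key (hn : 3 ≤ n) {S : Set (Option (Fin n ⊕ Fin n))}
    (hS : IsGPSet (Mycielskian (⊤ : SimpleGraph (Fin n))) S) :
    S ⊆ insert none {x | ∃ v : Fin n, x = some (Sum.inl v)} ∨ S.ncard ≤ n := by
  by_cases hB : ∀ u : Fin n, some (Sum.inr u) ∉ S
  · left
    intro x hx
    match x with
    | none => exact Set.mem_insert _ _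
    | some (Sum.inl v) => exact Set.mem_insert_of_mem _ ⟨v, rfl⟩
    | some (Sum.inr u) => exact absurd hx (hB u)
  right
  push_neg at hB
  obtain ⟨u, hu⟩ := hB
  by_cases hB2 : ∃ v, v ≠ u ∧ some (Sum.inr v) ∈ S
  · obtain ⟨v, hvu, hv⟩ := hB2
    have hnone : none ∉ S := fun hnS =>
      gp_excl hS hu hv hnS adj_rn adj_rn.symm not_adj_rr (by simp [hvu.symm])
    have hA : ∀ w : Fin n, some (Sum.inl w) ∈ S → w = u ∨ w = v := by
      intro w hw
      by_contra hc
      push_neg at hc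
      exact gp_excl hS hu hv hw ((adj_lr.mpr hc.1).symm) (adj_lr.mpr hc.2)
        not_adj_rr (by simp [hvu.symm])
    by_cases hAe : ∃ w, some (Sum.inl w) ∈ S
    · obtain ⟨w, hw⟩ := hAe
      have hwB : some (Sum.inr w) ∈ S := by
        rcases hA w hw with rfl | rfl
        exacts [hu, hv]
      have hB3 : ∀ c, some (Sum.inr c) ∈ S → c = u ∨ c = v := by
        intro c hc
        by_contra h
        push_neg at h
        rcases hA w hw with rfl | rfl
        · exact gp_excl hS hv hc hw ((adj_lr.mpr (Ne.symm hvu)).symm)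
            (adj_lr.mpr (Ne.symm h.1)) not_adj_rr (by simp [Ne.symm h.2])
        · exact gp_excl hS hu hc hw ((adj_lr.mpr hvu).symm)
            (adj_lr.mpr (Ne.symm h.2)) not_adj_rr (by simp [Ne.symm h.1])
      have hA1 : ∀ a, some (Sum.inl a) ∈ S → a = w := by
        intro a ha
        by_contra hne
        exact gp_excl hS hw hwB ha (adj_ll.mpr (Ne.symm hne)) (adj_lr.mpr hne)
          (fun h => (adj_lr.mp h) rfl) (by simp)
      have hsub : S ⊆ {some (Sum.inl w), some (Sum.inr u), some (Sum.inr v)} := by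
        intro x hx
        match x with
        | none => exact absurd hx hnone
        | some (Sum.inl a) => simp [hA1 a hx]
        | some (Sum.inr c) => rcases hB3 c hx with rfl | rfl <;> simp
      calc S.ncard ≤ ({some (Sum.inl w), some (Sum.inr u), some (Sum.inr v)}
            : Set (Option (Fin n ⊕ Fin n))).ncard := Set.ncard_le_ncard hsub (Set.toFinite _)
        _ ≤ 2 + 1 := le_trans (Set.ncard_insert_le _ _)
            (by gcongr; exact le_trans (Set.ncard_insert_le _ _) (by simp))
        _ ≤ n := by omega
    · push_neg at hAe
      have hsub : S ⊆ Set.range (fun c : Fin n => (some (Sum.inr c) : Option (Fin n ⊕ Fin n))) := by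
        intro x hx
        match x with
        | none => exact absurd hx hnone
        | some (Sum.inl a) => exact absurd hx (hAe a)
        | some (Sum.inr c) => exact ⟨c, rfl⟩
      calc S.ncard ≤ _ := Set.ncard_le_ncard hsub (Set.toFinite _)
        _ ≤ n := by
          rw [← Set.image_univ, Set.ncard_image_of_injective _
            (fun a b h => by simpa using h), Set.ncard_univ,
            Nat.card_eq_fintype_card, Fintype.card_fin]
  · push_neg at hB2
    by_cases hnS : none ∈ S
    · by_cases hAe : ∃ a, some (Sum.inl a) ∈ S
      · obtain ⟨a, ha⟩ := hAe
        have hua : u = a := by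
          by_contra h
          exact gp_excl hS hnS ha hu adj_rn.symm ((adj_lr.mpr (Ne.symm h)).symm)
            (fun h' => not_adj_ln h'.symm) (by simp)
        subst hua
        have hA1 : ∀ b, some (Sum.inl b) ∈ S → b = u := by
          intro b hb
          by_contra hne
          exact gp_excl hS ha hu hb (adj_ll.mpr (Ne.symm hne)) (adj_lr.mpr hne)
            (fun h => (adj_lr.mp h) rfl) (by simp)
        have hsub : S ⊆ {none, some (Sum.inl u), some (Sum.inr u)} := by
          intro x hx
          match x with
          | none => simp
          | some (Sum.inl b) => simp [hA1 b hx]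
          | some (Sum.inr c) =>
            rcases eq_or_ne c u with rfl | hne
            · simp
            · exact absurd hx (hB2 c hne)
        calc S.ncard ≤ _ := Set.ncard_le_ncard hsub (Set.toFinite _)
          _ ≤ 2 + 1 := le_trans (Set.ncard_insert_le _ _)
              (by gcongr; exact le_trans (Set.ncard_insert_le _ _) (by simp))
          _ ≤ n := by omega
      · push_neg at hAe
        have hsub : S ⊆ {none, some (Sum.inr u)} := by
          intro x hx
          match x with
          | none => simp
          | some (Sum.inl b) => exact absurd hx (hAe b)
          | some (Sum.inr c) =>
            rcases eq_or_ne c u with rfl | hne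
            · simp
            · exact absurd hx (hB2 c hne)
        calc S.ncard ≤ _ := Set.ncard_le_ncard hsub (Set.toFinite _)
          _ ≤ 1 + 1 := le_trans (Set.ncard_insert_le _ _) (by simp)
          _ ≤ n := by omega
    · by_cases huA : some (Sum.inl u) ∈ S
      · have hA1 : ∀ b, some (Sum.inl b) ∈ S → b = u := by
          intro b hb
          by_contra hne
          exact gp_excl hS huA hu hb (adj_ll.mpr (Ne.symm hne)) (adj_lr.mpr hne)
            (fun h => (adj_lr.mp h) rfl) (by simp)
        have hsub : S ⊆ {some (Sum.inl u), some (Sum.inr u)} := by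
          intro x hx
          match x with
          | none => exact absurd hx hnS
          | some (Sum.inl b) => simp [hA1 b hx]
          | some (Sum.inr c) =>
            rcases eq_or_ne c u with rfl | hne
            · simp
            · exact absurd hx (hB2 c hne)
        calc S.ncard ≤ _ := Set.ncard_le_ncard hsub (Set.toFinite _)
          _ ≤ 1 + 1 := le_trans (Set.ncard_insert_le _ _) (by simp)
          _ ≤ n := by omega
      · have hsub : S ⊆ insert (some (Sum.inr u))
            ((fun b : Fin n => (some (Sum.inl b) : Option (Fin n ⊕ Fin n))) '' {u}ᶜ) := by
          intro x hx
          match x with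
          | none => exact absurd hx hnS
          | some (Sum.inl b) =>
            rcases eq_or_ne b u with rfl | hne
            · exact absurd hx huA
            · exact Set.mem_insert_of_mem _ ⟨b, hne, rfl⟩
          | some (Sum.inr c) =>
            rcases eq_or_ne c u with rfl | hne
            · exact Set.mem_insert _ _
            · exact absurd hx (hB2 c hne)
        have hcompl : ({u}ᶜ : Set (Fin n)).ncard = n - 1 := by
          rw [Set.compl_eq_univ_diff, Set.ncard_diff (Set.subset_univ _), Set.ncard_univ,
            Nat.card_eq_fintype_card, Fintype.card_fin, Set.ncard_singleton]
        calc S.ncard ≤ _ := Set.ncard_le_ncard hsub (Set.toFinite _)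
          _ ≤ ((fun b : Fin n => (some (Sum.inl b) : Option (Fin n ⊕ Fin n))) '' {u}ᶜ).ncard + 1 :=
            Set.ncard_insert_le _ _
          _ = (n - 1) + 1 := by
            rw [Set.ncard_image_of_injective _ (fun a b h => by simpa using h), hcompl]
          _ ≤ n := by omega

end MycAux

theorem gpNumber_mycielskian_complete (n : ℕ) (hn : 3 ≤ n) :
    gpNumber (Mycielskian (⊤ : SimpleGraph (Fin n))) = n + 1 ∧
    ∀ S : Set (Option (Fin n ⊕ Fin n)),
      IsGpSet (Mycielskian (⊤ : SimpleGraph (Fin n))) S ↔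
        S = insert none {x | ∃ v : Fin n, x = some (Sum.inl v)} := by
  have hub : ∀ S : Set (Option (Fin n ⊕ Fin n)),
      IsGPSet (Mycielskian (⊤ : SimpleGraph (Fin n))) S → S.ncard ≤ n + 1 := by
    intro S hS
    rcases MycAux.key hn hS with h | h
    · calc S.ncard ≤ _ := Set.ncard_le_ncard h (Set.toFinite _)
        _ = n + 1 := MycAux.T_ncard
    · omega
  have hTgp := MycAux.T_gp hn
  have hmem : (n + 1) ∈ {k | ∃ S : Set (Option (Fin n ⊕ Fin n)),
      IsGPSet (Mycielskian (⊤ : SimpleGraph (Fin n))) S ∧ S.ncard = k} :=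
    ⟨_, hTgp, MycAux.T_ncard⟩
  have hbdd : ∀ k ∈ {k | ∃ S : Set (Option (Fin n ⊕ Fin n)),
      IsGPSet (Mycielskian (⊤ : SimpleGraph (Fin n))) S ∧ S.ncard = k}, k ≤ n + 1 := by
    rintro k ⟨S, hS, rfl⟩
    exact hub S hS
  have hgp : gpNumber (Mycielskian (⊤ : SimpleGraph (Fin n))) = n + 1 := by
    refine le_antisymm (csSup_le ⟨_, hmem⟩ hbdd) (le_csSup ⟨n + 1, hbdd⟩ hmem)
  refine ⟨hgp, fun S => ⟨fun h => ?_, fun h => ?_⟩⟩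
  · obtain ⟨hS, hc⟩ := h
    rw [hgp] at hc
    rcases MycAux.key hn hS with hsub | hle
    · exact Set.eq_of_subset_of_ncard_le hsub
        (by rw [hc, MycAux.T_ncard]) (Set.toFinite _)
    · omega
  · subst h
    exact ⟨hTgp, by rw [hgp, MycAux.T_ncard]⟩
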